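/- Let ⟨x,y⟩₁ = −x₀y₀ + x₁y₁ + x₂y₂ + x₃y₃ + x₄y₄ denote the Lorentzian bilinear form on ℝ⁵, let a, b be nonzero real numbers, and let Θ(t,u) = (a u² + a/b² + a + 1/(4a), u, cos(t)/b, sin(t)/b, a u² + a/b² + a − 1/(4a)). Define ξ₁(t,u) = (0, 0, cos t, sin t, 0), ξ₂(t,u) = ((4a²u² + 3)/(2√2), √2·a u, 0, 0, (4a²u² + 1)/(2√2)), and ξ₃(t,u) = ((1 − 4a²u²)/(2√2), −√2·a u, 0, 0, (3 − 4a²u²)/(2√2)). Then for all (t,u): ⟨ξ₁,ξ₁⟩₁ = 1, ⟨ξ₂,ξ₂⟩₁ = −1, ⟨ξ₃,ξ₃⟩₁ = 1; ⟨ξᵢ,ξⱼ⟩₁ = 0 for i ≠ j; ⟨ξᵢ, ∂ₜΘ⟩₁ = ⟨ξᵢ, ∂ᵤΘ⟩₁ = 0 for each i; and each partial derivative ∂ₜξᵢ and ∂ᵤξᵢ lies in the linear span of {∂ₜΘ(t,u), ∂ᵤΘ(t,u)} (explicitly, ∂ₜξ₁ = b·∂ₜΘ, ∂ᵤξ₁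 = 0, ∂ₜξ₂ = ∂ₜξ₃ = 0, ∂ᵤξ₂ = √2·a·∂ᵤΘ, ∂ᵤξ₃ = −√2·a·∂ᵤΘ). -/

import Mathlib

/-- The Lorentzian bilinear form on `ℝ⁵` with timelike coordinate `x₀`. -/
def lor5 (x y : Fin 5 → ℝ) : ℝ :=
  -(x 0 * y 0) + x 1 * y 1 + x 2 * y 2 + x 3 * y 3 + x 4 * y 4

lemma hasDerivAt_vec5 {f0 f1 f2 f3 f4 : ℝ → ℝ} {d0 d1 d2 d3 d4 : ℝ} {x : ℝ}
    (h0 : HasDerivAt f0 d0 x) (h1 : HasDerivAt f1 d1 x) (h2 : HasDerivAt f2 d2 x)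
    (h3 : HasDerivAt f3 d3 x) (h4 : HasDerivAt f4 d4 x) :
    HasDerivAt (fun x => (![f0 x, f1 x, f2 x, f3 x, f4 x] : Fin 5 → ℝ))
      ![d0, d1, d2, d3, d4] x := by
  rw [hasDerivAt_pi]
  intro i
  fin_cases i
  · simpa using h0
  · simpa using h1
  · simpa using h2
  · simpa using h3
  · simpa using h4

/-- Case 3 of the proof of Theorem 4.8: `ξ₁, ξ₂, ξ₃` form a parallel
pseudo-orthonormal basis of the normal bundle in `ℝ⁵₁` of the flat integral
surface of case (3) of Proposition 4.3. -/
theorem stmt_11 (a b : ℝ) (ha : a ≠ 0) (hb : b ≠ 0)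
    (Θ ξ₁ ξ₂ ξ₃ : ℝ → ℝ → Fin 5 → ℝ)
    (hΘ : ∀ t u : ℝ, Θ t u =
      ![a * u ^ 2 + a / b ^ 2 + a + 1 / (4 * a), u,
        Real.cos t / b, Real.sin t / b,
        a * u ^ 2 + a / b ^ 2 + a - 1 / (4 * a)])
    (hξ₁ : ∀ t u : ℝ, ξ₁ t u = ![0, 0, Real.cos t, Real.sin t, 0])
    (hξ₂ : ∀ t u : ℝ, ξ₂ t u =
      ![(4 * a ^ 2 * u ^ 2 + 3) / (2 * Real.sqrt 2), Real.sqrt 2 * a * u, 0, 0,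
        (4 * a ^ 2 * u ^ 2 + 1) / (2 * Real.sqrt 2)])
    (hξ₃ : ∀ t u : ℝ, ξ₃ t u =
      ![(1 - 4 * a ^ 2 * u ^ 2) / (2 * Real.sqrt 2), -(Real.sqrt 2 * a * u), 0, 0,
        (3 - 4 * a ^ 2 * u ^ 2) / (2 * Real.sqrt 2)]) :
    ∀ t u : ℝ,
      lor5 (ξ₁ t u) (ξ₁ t u) = 1 ∧
      lor5 (ξ₂ t u) (ξ₂ t u) = -1 ∧
      lor5 (ξ₃ t u) (ξ₃ t u) = 1 ∧
      lor5 (ξ₁ t u) (ξ₂ t u) = 0 ∧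
      lor5 (ξ₁ t u) (ξ₃ t u) = 0 ∧
      lor5 (ξ₂ t u) (ξ₃ t u) = 0 ∧
      lor5 (ξ₁ t u) (deriv (fun t' => Θ t' u) t) = 0 ∧
      lor5 (ξ₁ t u) (deriv (fun u' => Θ t u') u) = 0 ∧
      lor5 (ξ₂ t u) (deriv (fun t' => Θ t' u) t) = 0 ∧
      lor5 (ξ₂ t u) (deriv (fun u' => Θ t u') u) = 0 ∧
      lor5 (ξ₃ t u) (deriv (fun t' => Θ t' u) t) = 0 ∧
      lor5 (ξ₃ t u) (deriv (fun u' => Θ t u') u) = 0 ∧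
      deriv (fun t' => ξ₁ t' u) t = b • deriv (fun t' => Θ t' u) t ∧
      deriv (fun u' => ξ₁ t u') u = 0 ∧
      deriv (fun t' => ξ₂ t' u) t = 0 ∧
      deriv (fun u' => ξ₂ t u') u = (Real.sqrt 2 * a) • deriv (fun u' => Θ t u') u ∧
      deriv (fun t' => ξ₃ t' u) t = 0 ∧
      deriv (fun u' => ξ₃ t u') u = (-(Real.sqrt 2 * a)) • deriv (fun u' => Θ t u') u ∧
      deriv (fun t' => ξ₁ t' u) t ∈
        Submodule.span ℝ ({deriv (fun t' => Θ t' u) t, deriv (fun u' => Θ t u') u} : Set (Fin 5 → ℝ)) ∧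
      deriv (fun u' => ξ₁ t u') u ∈
        Submodule.span ℝ ({deriv (fun t' => Θ t' u) t, deriv (fun u' => Θ t u') u} : Set (Fin 5 → ℝ)) ∧
      deriv (fun t' => ξ₂ t' u) t ∈
        Submodule.span ℝ ({deriv (fun t' => Θ t' u) t, deriv (fun u' => Θ t u') u} : Set (Fin 5 → ℝ)) ∧
      deriv (fun u' => ξ₂ t u') u ∈
        Submodule.span ℝ ({deriv (fun t' => Θ t' u) t, deriv (fun u' => Θ t u') u} : Set (Fin 5 → ℝ)) ∧
      deriv (fun t' => ξ₃ t' u) t ∈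
        Submodule.span ℝ ({deriv (fun t' => Θ t' u) t, deriv (fun u' => Θ t u') u} : Set (Fin 5 → ℝ)) ∧
      deriv (fun u' => ξ₃ t u') u ∈
        Submodule.span ℝ ({deriv (fun t' => Θ t' u) t, deriv (fun u' => Θ t u') u} : Set (Fin 5 → ℝ)) := by
  intro t u
  have hs : Real.sqrt 2 * Real.sqrt 2 = 2 := Real.mul_self_sqrt (by norm_num)
  have hs0 : Real.sqrt 2 ≠ 0 := by positivity
  have hs2 : Real.sqrt 2 ^ 2 = 2 := Real.sq_sqrt (by norm_num)
  have hs4 : Real.sqrt 2 ^ 4 = 4 := by rw [show (4:ℕ) = 2*2 from rfl, pow_mul, hs2]; norm_num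
  -- derivatives of Θ
  have hΘt : deriv (fun t' => Θ t' u) t
      = ![0, 0, -Real.sin t / b, Real.cos t / b, 0] := by
    have hfun : (fun t' => Θ t' u) = fun t' =>
        ![a * u ^ 2 + a / b ^ 2 + a + 1 / (4 * a), u,
          Real.cos t' / b, Real.sin t' / b,
          a * u ^ 2 + a / b ^ 2 + a - 1 / (4 * a)] := funext fun t' => hΘ t' u
    rw [hfun]
    exact (hasDerivAt_vec5 (hasDerivAt_const t _) (hasDerivAt_const t _)
      ((Real.hasDerivAt_cos t).div_const b) ((Real.hasDerivAt_sin t).div_const b)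
      (hasDerivAt_const t _)).deriv
  have hΘu : deriv (fun u' => Θ t u') u
      = ![2 * a * u, 1, 0, 0, 2 * a * u] := by
    have hfun : (fun u' => Θ t u') = fun u' =>
        ![a * u' ^ 2 + a / b ^ 2 + a + 1 / (4 * a), u',
          Real.cos t / b, Real.sin t / b,
          a * u' ^ 2 + a / b ^ 2 + a - 1 / (4 * a)] := funext fun u' => hΘ t u'
    rw [hfun]
    have h0 : HasDerivAt (fun u' : ℝ => a * u' ^ 2 + a / b ^ 2 + a + 1 / (4 * a))
        (2 * a * u) u := by
      have := ((((hasDerivAt_pow 2 u).const_mul a).add_const (a / b ^ 2)).add_const a).add_const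
        (1 / (4 * a))
      refine this.congr_deriv ?_
      push_cast; ring
    have h4 : HasDerivAt (fun u' : ℝ => a * u' ^ 2 + a / b ^ 2 + a - 1 / (4 * a))
        (2 * a * u) u := by
      have := ((((hasDerivAt_pow 2 u).const_mul a).add_const (a / b ^ 2)).add_const a).sub_const
        (1 / (4 * a))
      refine this.congr_deriv ?_
      push_cast; ring
    exact (hasDerivAt_vec5 h0 (hasDerivAt_id u) (hasDerivAt_const u _)
      (hasDerivAt_const u _) h4).deriv
  -- derivatives of ξ₁
  have hξ₁t : deriv (fun t' => ξ₁ t' u) t = ![0, 0, -Real.sin t, Real.cos t, 0] := by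
    have hfun : (fun t' => ξ₁ t' u) = fun t' =>
        ![0, 0, Real.cos t', Real.sin t', 0] := funext fun t' => hξ₁ t' u
    rw [hfun]
    exact (hasDerivAt_vec5 (hasDerivAt_const t _) (hasDerivAt_const t _)
      (Real.hasDerivAt_cos t) (Real.hasDerivAt_sin t) (hasDerivAt_const t _)).deriv
  have hξ₁u : deriv (fun u' => ξ₁ t u') u = 0 := by
    have hfun : (fun u' => ξ₁ t u') = fun _ =>
        ![(0:ℝ), 0, Real.cos t, Real.sin t, 0] := funext fun u' => hξ₁ t u'
    rw [hfun, deriv_const]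
  have hξ₂t : deriv (fun t' => ξ₂ t' u) t = 0 := by
    have hfun : (fun t' => ξ₂ t' u) = fun _ =>
        ![(4 * a ^ 2 * u ^ 2 + 3) / (2 * Real.sqrt 2), Real.sqrt 2 * a * u, 0, 0,
          (4 * a ^ 2 * u ^ 2 + 1) / (2 * Real.sqrt 2)] := funext fun t' => hξ₂ t' u
    rw [hfun, deriv_const]
  have hξ₃t : deriv (fun t' => ξ₃ t' u) t = 0 := by
    have hfun : (fun t' => ξ₃ t' u) = fun _ =>
        ![(1 - 4 * a ^ 2 * u ^ 2) / (2 * Real.sqrt 2), -(Real.sqrt 2 * a * u), 0, 0,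
          (3 - 4 * a ^ 2 * u ^ 2) / (2 * Real.sqrt 2)] := funext fun t' => hξ₃ t' u
    rw [hfun, deriv_const]
  have hξ₂u : deriv (fun u' => ξ₂ t u') u
      = ![8 * a ^ 2 * u / (2 * Real.sqrt 2), Real.sqrt 2 * a, 0, 0,
          8 * a ^ 2 * u / (2 * Real.sqrt 2)] := by
    have hfun : (fun u' => ξ₂ t u') = fun u' =>
        ![(4 * a ^ 2 * u' ^ 2 + 3) / (2 * Real.sqrt 2), Real.sqrt 2 * a * u', 0, 0,
          (4 * a ^ 2 * u' ^ 2 + 1) / (2 * Real.sqrt 2)] := funext fun u' => hξ₂ t u'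
    rw [hfun]
    have h0 : HasDerivAt (fun u' : ℝ => (4 * a ^ 2 * u' ^ 2 + 3) / (2 * Real.sqrt 2))
        (8 * a ^ 2 * u / (2 * Real.sqrt 2)) u := by
      have := (((hasDerivAt_pow 2 u).const_mul (4 * a ^ 2)).add_const 3).div_const
        (2 * Real.sqrt 2)
      refine this.congr_deriv ?_
      push_cast; ring
    have h4 : HasDerivAt (fun u' : ℝ => (4 * a ^ 2 * u' ^ 2 + 1) / (2 * Real.sqrt 2))
        (8 * a ^ 2 * u / (2 * Real.sqrt 2)) u := by
      have := (((hasDerivAt_pow 2 u).const_mul (4 * a ^ 2)).add_const 1).div_const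
        (2 * Real.sqrt 2)
      refine this.congr_deriv ?_
      push_cast; ring
    have h1 : HasDerivAt (fun u' : ℝ => Real.sqrt 2 * a * u') (Real.sqrt 2 * a) u := by
      simpa using (hasDerivAt_id u).const_mul (Real.sqrt 2 * a)
    exact (hasDerivAt_vec5 h0 h1 (hasDerivAt_const u _) (hasDerivAt_const u _) h4).deriv
  have hξ₃u : deriv (fun u' => ξ₃ t u') u
      = ![-(8 * a ^ 2 * u) / (2 * Real.sqrt 2), -(Real.sqrt 2 * a), 0, 0,
          -(8 * a ^ 2 * u) / (2 * Real.sqrt 2)] := by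
    have hfun : (fun u' => ξ₃ t u') = fun u' =>
        ![(1 - 4 * a ^ 2 * u' ^ 2) / (2 * Real.sqrt 2), -(Real.sqrt 2 * a * u'), 0, 0,
          (3 - 4 * a ^ 2 * u' ^ 2) / (2 * Real.sqrt 2)] := funext fun u' => hξ₃ t u'
    rw [hfun]
    have h0 : HasDerivAt (fun u' : ℝ => (1 - 4 * a ^ 2 * u' ^ 2) / (2 * Real.sqrt 2))
        (-(8 * a ^ 2 * u) / (2 * Real.sqrt 2)) u := by
      have := (((hasDerivAt_pow 2 u).const_mul (4 * a ^ 2)).const_sub 1).div_const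
        (2 * Real.sqrt 2)
      refine this.congr_deriv ?_
      push_cast; ring
    have h4 : HasDerivAt (fun u' : ℝ => (3 - 4 * a ^ 2 * u' ^ 2) / (2 * Real.sqrt 2))
        (-(8 * a ^ 2 * u) / (2 * Real.sqrt 2)) u := by
      have := (((hasDerivAt_pow 2 u).const_mul (4 * a ^ 2)).const_sub 3).div_const
        (2 * Real.sqrt 2)
      refine this.congr_deriv ?_
      push_cast; ring
    have h1 : HasDerivAt (fun u' : ℝ => -(Real.sqrt 2 * a * u')) (-(Real.sqrt 2 * a)) u := by
      simpa using ((hasDerivAt_id u).const_mul (Real.sqrt 2 * a)).fun_neg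
    exact (hasDerivAt_vec5 h0 h1 (hasDerivAt_const u _) (hasDerivAt_const u _) h4).deriv
  -- explicit scalar equalities
  have e1 : deriv (fun t' => ξ₁ t' u) t = b • deriv (fun t' => Θ t' u) t := by
    rw [hξ₁t, hΘt]
    funext i; fin_cases i <;> (simp; try field_simp; try ring; try ring_nf; try simp only [hs2, hs4]; try ring)
  have e2 : deriv (fun u' => ξ₂ t u') u = (Real.sqrt 2 * a) • deriv (fun u' => Θ t u') u := by
    rw [hξ₂u, hΘu]
    funext i; fin_cases i <;> (simp; try field_simp; try ring; try ring_nf; try simp only [hs2, hs4]; try ring)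
    all_goals (simp only [hs2]; ring)
  have e3 : deriv (fun u' => ξ₃ t u') u
      = (-(Real.sqrt 2 * a)) • deriv (fun u' => Θ t u') u := by
    rw [hξ₃u, hΘu]
    funext i; fin_cases i <;> (simp; try field_simp; try ring; try ring_nf; try simp only [hs2, hs4]; try ring)
    all_goals (simp only [hs2]; ring)
  have hmem1 : deriv (fun t' => Θ t' u) t ∈
      Submodule.span ℝ ({deriv (fun t' => Θ t' u) t, deriv (fun u' => Θ t u') u} : Set (Fin 5 → ℝ)) :=
    Submodule.subset_span (by simp)
  have hmem2 : deriv (fun u' => Θ t u') u ∈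
      Submodule.span ℝ ({deriv (fun t' => Θ t' u) t, deriv (fun u' => Θ t u') u} : Set (Fin 5 → ℝ)) :=
    Submodule.subset_span (by simp)
  have hpyth := Real.sin_sq_add_cos_sq t
  refine ⟨?_, ?_, ?_, ?_, ?_, ?_, ?_, ?_, ?_, ?_, ?_, ?_, e1, hξ₁u, hξ₂t, e2, hξ₃t, e3,
    ?_, ?_, ?_, ?_, ?_, ?_⟩
  · simp [lor5, hξ₁]; nlinarith [hpyth]
  · simp [lor5, hξ₂]; field_simp; ring_nf; simp only [hs2, hs4]; try ring
  · simp [lor5, hξ₃]; field_simp; ring_nf; simp only [hs2, hs4]; try ring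
  · simp [lor5, hξ₁, hξ₂]
  · simp [lor5, hξ₁, hξ₃]
  · simp [lor5, hξ₂, hξ₃]; field_simp; ring_nf; simp only [hs2, hs4]; try ring
  · simp [lor5, hξ₁, hΘt]; ring
  · simp [lor5, hξ₁, hΘu]
  · simp [lor5, hξ₂, hΘt]
  · simp [lor5, hξ₂, hΘu]; field_simp; ring_nf; simp only [hs2, hs4]; try ring
  · simp [lor5, hξ₃, hΘt]
  · simp [lor5, hξ₃, hΘu]; field_simp; ring_nf; simp only [hs2, hs4]; try ring
  · rw [e1]; exact Submodule.smul_mem _ _ hmem1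
  · rw [hξ₁u]; exact Submodule.zero_mem _
  · rw [hξ₂t]; exact Submodule.zero_mem _
  · rw [e2]; exact Submodule.smul_mem _ _ hmem2
  · rw [hξ₃t]; exact Submodule.zero_mem _
  · rw [e3]; exact Submodule.smul_mem _ _ hmem2
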